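/- For i = 1, …, n, let A_i be real symmetric d×d matrices with μI ⪯ A_i ⪯ LI for some 0 < μ ≤ L, let c_i ∈ ℝ^d, and let p_1, …, p_n > 0 with Σ p_i = 1. Let α ≥ 0, 0 ≤ γ < 1/(L + α), and θ_1,…,θ_K nonnegative reals not all zero, and set Q_i := Q(A_i; α, γ, θ). Then Σ_i p_i Q_i A_i is symmetric positive definite, and the surrogate loss f̃(x) := Σ_i p_i (1/2)⟨x − c_i, Q_i A_i (x − c_i)⟩ has the unique global minimizer x*(α, γ, θ) = (Σ_i p_i Q_i A_i)^{−1} (Σ_i p_i Q_i A_i c_i). -/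

import Mathlib

open Matrix Finset

/-- The distortion matrix `Q(A; α, γ, θ) = Σ_{k=1}^K θ_k (I - γ(A + αI))^(k-1)`. -/
noncomputable def distortion {d : ℕ} (K : ℕ) (A : Matrix (Fin d) (Fin d) ℝ)
    (α γ : ℝ) (θ : ℕ → ℝ) : Matrix (Fin d) (Fin d) ℝ :=
  ∑ k ∈ Finset.Icc 1 K,
    θ k • ((1 : Matrix (Fin d) (Fin d) ℝ) - γ • (A + α • 1)) ^ (k - 1)

namespace Stmt16

variable {d : ℕ}

lemma isHermitian_of_isSymm {M : Matrix (Fin d) (Fin d) ℝ} (h : M.IsSymm) : M.IsHermitian := by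
  rw [Matrix.IsHermitian, conjTranspose_eq_transpose_of_trivial, h.eq]

lemma isSymm_of_isHermitian {M : Matrix (Fin d) (Fin d) ℝ} (h : M.IsHermitian) : M.IsSymm := by
  rw [Matrix.IsSymm, ← conjTranspose_eq_transpose_of_trivial, h.eq]

lemma posSemidef_smul {a : ℝ} {M : Matrix (Fin d) (Fin d) ℝ} (ha : 0 ≤ a)
    (hM : M.PosSemidef) : (a • M).PosSemidef := by
  refine .of_dotProduct_mulVec_nonneg (isHermitian_of_isSymm ?_) fun x => ?_
  · rw [Matrix.IsSymm, transpose_smul, (isSymm_of_isHermitian hM.1).eq]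
  · rw [smul_mulVec, dotProduct_smul, smul_eq_mul]
    exact mul_nonneg ha (hM.dotProduct_mulVec_nonneg x)

lemma posDef_smul {a : ℝ} {M : Matrix (Fin d) (Fin d) ℝ} (ha : 0 < a)
    (hM : M.PosDef) : (a • M).PosDef := by
  refine .of_dotProduct_mulVec_pos (isHermitian_of_isSymm ?_) fun x hx => ?_
  · rw [Matrix.IsSymm, transpose_smul, (isSymm_of_isHermitian hM.1).eq]
  · rw [smul_mulVec, dotProduct_smul, smul_eq_mul]
    exact mul_pos ha (hM.dotProduct_mulVec_pos hx)

lemma posSemidef_sum {ι : Type*} (s : Finset ι) (f : ι → Matrix (Fin d) (Fin d) ℝ)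
    (h : ∀ i ∈ s, (f i).PosSemidef) : (∑ i ∈ s, f i).PosSemidef :=
  Finset.sum_induction f _ (fun _ _ ha hb => ha.add hb) Matrix.PosSemidef.zero h

lemma posDef_sum {ι : Type*} [DecidableEq ι] {s : Finset ι} (hs : s.Nonempty)
    (f : ι → Matrix (Fin d) (Fin d) ℝ)
    (h : ∀ i ∈ s, (f i).PosDef) : (∑ i ∈ s, f i).PosDef := by
  obtain ⟨i0, hi0⟩ := hs
  rw [← Finset.add_sum_erase s f hi0]
  exact (h i0 hi0).add_posSemidef (posSemidef_sum _ _
    fun j hj => (h j (Finset.mem_of_mem_erase hj)).posSemidef)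

lemma posDef_conj {M C : Matrix (Fin d) (Fin d) ℝ} (hM : M.PosDef) (hC : IsUnit C) :
    (Cᴴ * M * C).PosDef := by
  refine .of_dotProduct_mulVec_pos (isHermitian_conjTranspose_mul_mul C hM.1) fun x hx => ?_
  have hinj := Matrix.mulVec_injective_iff_isUnit.mpr hC
  have hCx : C *ᵥ x ≠ 0 := fun h => hx (hinj (by simpa using h))
  have key : star x ⬝ᵥ (Cᴴ * M * C) *ᵥ x = star (C *ᵥ x) ⬝ᵥ M *ᵥ (C *ᵥ x) := by
    rw [star_mulVec, ← Matrix.mulVec_mulVec, ← Matrix.mulVec_mulVec,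
      dotProduct_mulVec]
  rw [key]
  exact hM.dotProduct_mulVec_pos hCx

lemma posDef_unitary_conj {U : Matrix (Fin d) (Fin d) ℝ}
    (hU : U ∈ Matrix.unitaryGroup (Fin d) ℝ)
    {g : Fin d → ℝ} (hg : ∀ j, 0 < g j) : (U * diagonal g * star U).PosDef := by
  have h1 : star U * U = 1 := Matrix.mem_unitaryGroup_iff'.mp hU
  have h2 : U * star U = 1 := Matrix.mem_unitaryGroup_iff.mp hU
  have hC : IsUnit (star U) := ⟨⟨star U, U, h1, h2⟩, rfl⟩
  have := posDef_conj (Matrix.PosDef.diagonal hg) hC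
  simpa [Matrix.star_eq_conjTranspose] using this

section conj

variable {U V : Matrix (Fin d) (Fin d) ℝ}

lemma conj_mul (hVU : V * U = 1) (g h : Fin d → ℝ) :
    (U * diagonal g * V) * (U * diagonal h * V)
      = U * diagonal (fun j => g j * h j) * V := by
  simp only [Matrix.mul_assoc]
  rw [← Matrix.mul_assoc V U, hVU, Matrix.one_mul,
    ← Matrix.mul_assoc (diagonal g) (diagonal h), diagonal_mul_diagonal]

lemma conj_add (g h : Fin d → ℝ) :
    U * diagonal g * V + U * diagonal h * V
      = U * diagonal (fun j => g j + h j) * V := by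
  rw [← diagonal_add, Matrix.mul_add, Matrix.add_mul]

lemma conj_sub (g h : Fin d → ℝ) :
    U * diagonal g * V - U * diagonal h * V
      = U * diagonal (fun j => g j - h j) * V := by
  rw [← diagonal_sub, Matrix.mul_sub, Matrix.sub_mul]

lemma conj_smul (a : ℝ) (g : Fin d → ℝ) :
    a • (U * diagonal g * V) = U * diagonal (fun j => a * g j) * V := by
  rw [show (fun j => a * g j) = a • g from rfl, diagonal_smul, Matrix.mul_smul,
    Matrix.smul_mul]

lemma conj_one (hUV : U * V = 1) :
    (1 : Matrix (Fin d) (Fin d) ℝ) = U * diagonal (fun _ => 1) * V := by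
  rw [diagonal_one, Matrix.mul_one, hUV]

lemma conj_pow (hVU : V * U = 1) (hUV : U * V = 1) (g : Fin d → ℝ) (m : ℕ) :
    (U * diagonal g * V) ^ m = U * diagonal (fun j => g j ^ m) * V := by
  induction m with
  | zero =>
    have h0 : (fun j => g j ^ 0) = fun _ : Fin d => (1 : ℝ) := by funext j; rw [pow_zero]
    rw [pow_zero, h0, ← conj_one hUV]
  | succ m ih =>
    have hs : (fun j => g j ^ m * g j) = fun j => g j ^ (m + 1) := by
      funext j; rw [pow_succ]
    rw [pow_succ, ih, conj_mul hVU, hs]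

lemma conj_sum {ι : Type*} (s : Finset ι) (g : ι → Fin d → ℝ) :
    ∑ k ∈ s, U * diagonal (g k) * V
      = U * diagonal (fun j => ∑ k ∈ s, g k j) * V := by
  induction s using Finset.cons_induction with
  | empty => simp
  | cons a s ha ih =>
    have hcons : (fun j => g a j + ∑ k ∈ s, g k j)
        = fun j => ∑ k ∈ Finset.cons a s ha, g k j := by
      funext j; rw [Finset.sum_cons]
    rw [Finset.sum_cons, ih, conj_add, hcons]

end conj

lemma eig_lower {A : Matrix (Fin d) (Fin d) ℝ} {μ lam : ℝ}
    (h : (A - μ • 1).PosSemidef) {v : Fin d → ℝ} (hv : v ≠ 0)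
    (hAv : A *ᵥ v = lam • v) : μ ≤ lam := by
  have h2 := h.dotProduct_mulVec_nonneg v
  have hsub : (A - μ • 1) *ᵥ v = (lam - μ) • v := by
    rw [Matrix.sub_mulVec, hAv, smul_mulVec, Matrix.one_mulVec, sub_smul]
  rw [hsub, dotProduct_smul, smul_eq_mul] at h2
  have hvv : 0 < star v ⬝ᵥ v := dotProduct_star_self_pos_iff.mpr hv
  nlinarith

lemma eig_upper {A : Matrix (Fin d) (Fin d) ℝ} {L lam : ℝ}
    (h : (L • 1 - A).PosSemidef) {v : Fin d → ℝ} (hv : v ≠ 0)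
    (hAv : A *ᵥ v = lam • v) : lam ≤ L := by
  have h2 := h.dotProduct_mulVec_nonneg v
  have hsub : (L • 1 - A) *ᵥ v = (L - lam) • v := by
    rw [Matrix.sub_mulVec, hAv, smul_mulVec, Matrix.one_mulVec, sub_smul]
  rw [hsub, dotProduct_smul, smul_eq_mul] at h2
  have hvv : 0 < star v ⬝ᵥ v := dotProduct_star_self_pos_iff.mpr hv
  nlinarith

/-- Simultaneous diagonalization of `distortion K A α γ θ * A`. -/
lemma QA_diag (K : ℕ) {A : Matrix (Fin d) (Fin d) ℝ} (hA : A.IsSymm)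
    (α γ : ℝ) (θ : ℕ → ℝ) :
    ∃ (U : Matrix (Fin d) (Fin d) ℝ) (lam : Fin d → ℝ),
      U ∈ Matrix.unitaryGroup (Fin d) ℝ ∧
      (∀ j, ∃ v : Fin d → ℝ, v ≠ 0 ∧ A *ᵥ v = lam j • v) ∧
      distortion K A α γ θ * A =
        U * diagonal (fun j =>
          (∑ k ∈ Finset.Icc 1 K, θ k * (1 - γ * (lam j + α)) ^ (k - 1)) * lam j)
          * star U := by
  have hH : A.IsHermitian := isHermitian_of_isSymm hA
  set U : Matrix (Fin d) (Fin d) ℝ := (hH.eigenvectorUnitary : Matrix (Fin d) (Fin d) ℝ)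
  set lam : Fin d → ℝ := hH.eigenvalues
  have hUmem : U ∈ Matrix.unitaryGroup (Fin d) ℝ := hH.eigenvectorUnitary.2
  set V : Matrix (Fin d) (Fin d) ℝ := star U with hV
  have hVU : V * U = 1 := Matrix.mem_unitaryGroup_iff'.mp hUmem
  have hUV : U * V = 1 := Matrix.mem_unitaryGroup_iff.mp hUmem
  have hspec : A = U * diagonal lam * V := by
    have := hH.spectral_theorem
    rwa [RCLike.ofReal_real_eq_id, Function.id_comp] at this
  refine ⟨U, lam, hUmem, fun j => ?_, ?_⟩
  · refine ⟨⇑(hH.eigenvectorBasis j), ?_, hH.mulVec_eigenvectorBasis j⟩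
    intro hzero
    exact hH.eigenvectorBasis.orthonormal.ne_zero j (by ext t; exact congrFun hzero t)
  · have hB : (1 : Matrix (Fin d) (Fin d) ℝ) - γ • (A + α • 1) =
        U * diagonal (fun j => 1 - γ * (lam j + α)) * V := by
      rw [hspec, conj_one hUV, conj_smul, conj_add, conj_smul, conj_sub]
      have : (fun j => (1 : ℝ) - γ * (lam j + α * 1))
          = fun j => 1 - γ * (lam j + α) := by funext j; ring
      rw [this]
    have hQd : distortion K A α γ θ =
        U * diagonal (fun j =>
          ∑ k ∈ Finset.Icc 1 K, θ k * (1 - γ * (lam j + α)) ^ (k - 1)) * V := by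
      unfold distortion
      rw [Finset.sum_congr rfl (fun k _ => by
        rw [hB, conj_pow hVU hUV, conj_smul] :
          ∀ k ∈ Finset.Icc 1 K, θ k • ((1 : Matrix (Fin d) (Fin d) ℝ)
            - γ • (A + α • 1)) ^ (k - 1)
            = U * diagonal (fun j => θ k * (1 - γ * (lam j + α)) ^ (k - 1)) * V)]
      exact conj_sum _ _
    rw [hQd]
    nth_rewrite 1 [hspec]
    rw [conj_mul hVU]

lemma sum_mulVec {ι : Type*} (s : Finset ι) (f : ι → Matrix (Fin d) (Fin d) ℝ)
    (v : Fin d → ℝ) :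
    (∑ i ∈ s, f i) *ᵥ v = ∑ i ∈ s, f i *ᵥ v := by
  induction s using Finset.cons_induction with
  | empty => simp
  | cons a s ha ih => rw [Finset.sum_cons, Finset.sum_cons, Matrix.add_mulVec, ih]

lemma dotProduct_sum {ι : Type*} (s : Finset ι) (u : Fin d → ℝ) (v : ι → Fin d → ℝ) :
    u ⬝ᵥ (∑ i ∈ s, v i) = ∑ i ∈ s, u ⬝ᵥ v i := by
  induction s using Finset.cons_induction with
  | empty => simp
  | cons a s ha ih => rw [Finset.sum_cons, Finset.sum_cons, dotProduct_add, ih]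

lemma herm_dot {N : Matrix (Fin d) (Fin d) ℝ} (hN : N.IsHermitian) (u w : Fin d → ℝ) :
    u ⬝ᵥ N *ᵥ w = w ⬝ᵥ N *ᵥ u := by
  have hs : Nᵀ = N := by rw [← conjTranspose_eq_transpose_of_trivial, hN.eq]
  rw [dotProduct_mulVec, ← Matrix.mulVec_transpose, hs, dotProduct_comm]

end Stmt16

open Stmt16 in
/-- The matrix `Σ_i p_i Q_i A_i` is symmetric positive definite, and the
surrogate loss `f̃(x) = Σ_i p_i (1/2)⟨x − c_i, Q_i A_i (x − c_i)⟩` has the unique global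
minimizer `x* = (Σ_i p_i Q_i A_i)⁻¹ (Σ_i p_i Q_i A_i c_i)`. -/
theorem stmt_16 (d n K : ℕ) (A : Fin n → Matrix (Fin d) (Fin d) ℝ)
    (hA : ∀ i, (A i).IsSymm)
    (μ L : ℝ) (hμ : 0 < μ) (hμL : μ ≤ L)
    (hAlow : ∀ i, (A i - μ • (1 : Matrix (Fin d) (Fin d) ℝ)).PosSemidef)
    (hAup : ∀ i, (L • (1 : Matrix (Fin d) (Fin d) ℝ) - A i).PosSemidef)
    (c : Fin n → Fin d → ℝ)
    (p : Fin n → ℝ) (hp : ∀ i, 0 < p i) (hp1 : ∑ i, p i = 1)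
    (α γ : ℝ) (hα : 0 ≤ α) (hγ0 : 0 ≤ γ) (hγ : γ < 1 / (L + α))
    (θ : ℕ → ℝ) (hθ : ∀ k, 0 ≤ θ k) (hθne : ∃ k ∈ Finset.Icc 1 K, θ k ≠ 0)
    (Q : Fin n → Matrix (Fin d) (Fin d) ℝ) (hQ : ∀ i, Q i = distortion K (A i) α γ θ)
    (ftil : (Fin d → ℝ) → ℝ)
    (hf : ∀ x, ftil x = ∑ i, p i *
      ((1 / 2) * ((x - c i) ⬝ᵥ (Q i * A i).mulVec (x - c i))))
    (xstar : Fin d → ℝ)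
    (hxstar : xstar =
      (∑ i, p i • (Q i * A i))⁻¹.mulVec (∑ i, p i • (Q i * A i).mulVec (c i))) :
    (∑ i, p i • (Q i * A i)).PosDef ∧
    (∀ x, ftil xstar ≤ ftil x) ∧
    (∀ x, ftil x = ftil xstar → x = xstar) := by
  classical
  have hn : (Finset.univ : Finset (Fin n)).Nonempty := by
    by_contra h
    rw [Finset.not_nonempty_iff_eq_empty] at h
    rw [h, Finset.sum_empty] at hp1
    norm_num at hp1
  have hLα : 0 < L + α := by linarith
  have hγ1 : γ * (L + α) < 1 := by
    have := (lt_div_iff₀ hLα).mp hγ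
    linarith
  have hTpd : ∀ i, (Q i * A i).PosDef := by
    intro i
    obtain ⟨U, lam, hU, hvec, hdiag⟩ := Stmt16.QA_diag K (hA i) α γ θ
    rw [hQ i, hdiag]
    apply Stmt16.posDef_unitary_conj hU
    intro j
    obtain ⟨v, hv0, hAv⟩ := hvec j
    have h1 : μ ≤ lam j := Stmt16.eig_lower (hAlow i) hv0 hAv
    have h2 : lam j ≤ L := Stmt16.eig_upper (hAup i) hv0 hAv
    have hfj : 0 < 1 - γ * (lam j + α) := by nlinarith
    have hq : 0 < ∑ k ∈ Finset.Icc 1 K, θ k * (1 - γ * (lam j + α)) ^ (k - 1) := by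
      obtain ⟨k0, hk0, hθ0⟩ := hθne
      refine Finset.sum_pos' (fun k _ => mul_nonneg (hθ k) (pow_pos hfj _).le) ⟨k0, hk0, ?_⟩
      exact mul_pos ((hθ k0).lt_of_ne (Ne.symm hθ0)) (pow_pos hfj _)
    exact mul_pos hq (lt_of_lt_of_le hμ h1)
  have hMpd : (∑ i, p i • (Q i * A i)).PosDef :=
    Stmt16.posDef_sum hn _ (fun i _ => Stmt16.posDef_smul (hp i) (hTpd i))
  set M : Matrix (Fin d) (Fin d) ℝ := ∑ i, p i • (Q i * A i) with hMdef
  set b : Fin d → ℝ := ∑ i, p i • (Q i * A i) *ᵥ c i with hbdef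
  have hMunit : IsUnit M.det := (Matrix.isUnit_iff_isUnit_det M).mp hMpd.isUnit
  have hMx : M *ᵥ xstar = b := by
    rw [hxstar, Matrix.mulVec_mulVec, Matrix.mul_nonsing_inv _ hMunit, Matrix.one_mulVec]
  have hquad : ∀ u : Fin d → ℝ, u ⬝ᵥ M *ᵥ u = ∑ i, p i * (u ⬝ᵥ (Q i * A i) *ᵥ u) := by
    intro u
    rw [hMdef, Stmt16.sum_mulVec, Stmt16.dotProduct_sum]
    exact Finset.sum_congr rfl fun i _ => by
      rw [smul_mulVec, dotProduct_smul, smul_eq_mul]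
  have hz : ∑ i, p i • ((Q i * A i) *ᵥ (xstar - c i)) = (0 : Fin d → ℝ) := by
    have h1 : ∀ i : Fin n, p i • ((Q i * A i) *ᵥ (xstar - c i))
        = p i • ((Q i * A i) *ᵥ xstar) - p i • ((Q i * A i) *ᵥ c i) := by
      intro i; rw [Matrix.mulVec_sub, smul_sub]
    rw [Finset.sum_congr rfl fun i _ => h1 i, Finset.sum_sub_distrib]
    have h2 : ∑ i, p i • ((Q i * A i) *ᵥ xstar) = b := by
      rw [← hMx, hMdef, Stmt16.sum_mulVec]
      exact Finset.sum_congr rfl fun i _ => (smul_mulVec _ _ _).symm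
    rw [h2, hbdef, sub_self]
  have hcross : ∀ x : Fin d → ℝ,
      ∑ i, p i * ((x - xstar) ⬝ᵥ (Q i * A i) *ᵥ (xstar - c i)) = 0 := by
    intro x
    have h1 : ∀ i : Fin n, p i * ((x - xstar) ⬝ᵥ (Q i * A i) *ᵥ (xstar - c i))
        = (x - xstar) ⬝ᵥ (p i • ((Q i * A i) *ᵥ (xstar - c i))) := by
      intro i; rw [dotProduct_smul, smul_eq_mul]
    rw [Finset.sum_congr rfl fun i _ => h1 i, ← Stmt16.dotProduct_sum, hz, dotProduct_zero]
  have key : ∀ x, ftil x = ftil xstar + (1/2) * ((x - xstar) ⬝ᵥ M *ᵥ (x - xstar)) := by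
    intro x
    have expand : ∀ i : Fin n,
        (x - c i) ⬝ᵥ (Q i * A i) *ᵥ (x - c i)
          = ((x - xstar) ⬝ᵥ (Q i * A i) *ᵥ (x - xstar))
            + 2 * ((x - xstar) ⬝ᵥ (Q i * A i) *ᵥ (xstar - c i))
            + ((xstar - c i) ⬝ᵥ (Q i * A i) *ᵥ (xstar - c i)) := by
      intro i
      rw [← sub_add_sub_cancel x xstar (c i), add_dotProduct, Matrix.mulVec_add,
        dotProduct_add, dotProduct_add,
        Stmt16.herm_dot (hTpd i).1 (xstar - c i) (x - xstar)]
      ring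
    rw [hf x, hf xstar, hquad (x - xstar), Finset.mul_sum]
    calc ∑ i, p i * (1 / 2 * ((x - c i) ⬝ᵥ (Q i * A i) *ᵥ (x - c i)))
        = ∑ i, (p i * (1 / 2 * ((xstar - c i) ⬝ᵥ (Q i * A i) *ᵥ (xstar - c i)))
            + 1 / 2 * (p i * ((x - xstar) ⬝ᵥ (Q i * A i) *ᵥ (x - xstar)))
            + p i * ((x - xstar) ⬝ᵥ (Q i * A i) *ᵥ (xstar - c i))) := by
          refine Finset.sum_congr rfl fun i _ => ?_
          rw [expand i]; ring
      _ = ∑ i, p i * (1 / 2 * ((xstar - c i) ⬝ᵥ (Q i * A i) *ᵥ (xstar - c i)))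
            + ∑ i, 1 / 2 * (p i * ((x - xstar) ⬝ᵥ (Q i * A i) *ᵥ (x - xstar))) := by
          rw [Finset.sum_add_distrib, Finset.sum_add_distrib, hcross x, add_zero]
  refine ⟨hMpd, ?_, ?_⟩
  · intro x
    have h0 : 0 ≤ (x - xstar) ⬝ᵥ M *ᵥ (x - xstar) := by
      have := hMpd.posSemidef.dotProduct_mulVec_nonneg (x - xstar)
      simpa using this
    rw [key x]
    linarith
  · intro x hx
    by_contra hne
    have hu : x - xstar ≠ 0 := sub_ne_zero_of_ne hne
    have hpos : 0 < (x - xstar) ⬝ᵥ M *ᵥ (x - xstar) := by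
      have := hMpd.dotProduct_mulVec_pos hu
      simpa using this
    rw [key x] at hx
    linarith
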